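/- Let G be a finite simple graph that does not contain K_{2,3} as a minor. Then G contains K^4 as a minor if and only if G contains K^4 as a subgraph. -/

import Mathlib

open SimpleGraph

universe u w

/-- `H` is a minor of `G`: pairwise disjoint nonempty connected branch sets, one per
vertex of `H`, with an edge of `G` between the branch sets of adjacent vertices of `H`. -/
def IsMinor {V : Type u} {W : Type w} (G : SimpleGraph V) (H : SimpleGraph W) : Prop :=
  ∃ B : W → Set V, (∀ x, (B x).Nonempty) ∧
    (∀ x, (G.induce (B x)).Connected) ∧
    (Pairwise fun x y => Disjoint (B x) (B y)) ∧
    ∀ ⦃x y : W⦄, H.Adj x y → ∃ a ∈ B x, ∃ b ∈ B y, G.Adj a b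

/-- `G` contains `H` as a subgraph. -/
def ContainsSubgraph {V : Type u} {W : Type w} (G : SimpleGraph V) (H : SimpleGraph W) : Prop :=
  ∃ f : H →g G, Function.Injective f

/-- The complete graph on four vertices. -/
def K4 : SimpleGraph (Fin 4) := completeGraph (Fin 4)

/-- The complete bipartite graph with parts of sizes 2 and 3. -/
def K23 : SimpleGraph (Fin 2 ⊕ Fin 3) := completeBipartiteGraph (Fin 2) (Fin 3)


section Helpers

variable {V : Type u} {G : SimpleGraph V}

/-- First-hit trimming of a walk. -/
lemma firstHit {a b : V} (p : G.Walk a b) (T : Set V) (hb : b ∈ T) :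
    ∃ c, ∃ q : G.Walk a c, c ∈ T ∧ (∀ v ∈ q.support, v ∈ p.support) ∧
      (∀ v ∈ q.support, v ∈ T → v = c) := by
  induction p with
  | nil => exact ⟨_, Walk.nil, hb, by simp, by simp⟩
  | @cons a a' b h p ih =>
    by_cases haT : a ∈ T
    · exact ⟨a, Walk.nil, haT, by simp, by simp⟩
    · obtain ⟨c, q, hc, hsub, hhit⟩ := ih hb
      refine ⟨c, Walk.cons h q, hc, ?_, ?_⟩
      · intro v hv
        rw [Walk.support_cons, List.mem_cons] at hv ⊢
        exact hv.imp id (fun h' => hsub _ h')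
      · intro v hv hvT
        rw [Walk.support_cons, List.mem_cons] at hv
        rcases hv with rfl | hv
        · exact absurd hvT haT
        · exact hhit _ hv hvT

/-- Splitting a path at a non-final vertex. -/
lemma splitAt {a b : V} (p : G.Walk a b) (hp : p.IsPath) (x : V) (hx : x ∈ p.support)
    (hxb : x ≠ b) :
    ∃ c, ∃ q : G.Walk a x, ∃ r : G.Walk c b, G.Adj x c ∧
      (∀ v ∈ q.support, v ∈ p.support) ∧ (∀ v ∈ r.support, v ∈ p.support) ∧
      (∀ v ∈ q.support, v ∉ r.support) := by
  induction p with
  | nil =>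
    rw [Walk.support_nil, List.mem_singleton] at hx
    exact absurd hx hxb
  | @cons a a' b h p ih =>
    by_cases hxa : x = a
    · subst hxa
      refine ⟨a', Walk.nil, p, h, by simp, ?_, ?_⟩
      · intro v hv; rw [Walk.support_cons, List.mem_cons]; exact Or.inr hv
      · intro v hv
        rw [Walk.support_nil, List.mem_singleton] at hv
        subst hv
        exact ((Walk.cons_isPath_iff h p).mp hp).2
    · have hx' : x ∈ p.support := by
        rw [Walk.support_cons, List.mem_cons] at hx
        exact hx.resolve_left hxa
      obtain ⟨c, q, r, hadj, hq, hr, hdisj⟩ := ih hp.of_cons hx' hxb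
      refine ⟨c, Walk.cons h q, r, hadj, ?_, ?_, ?_⟩
      · intro v hv
        rw [Walk.support_cons, List.mem_cons] at hv ⊢
        exact hv.imp id (fun h' => hq _ h')
      · intro v hv
        rw [Walk.support_cons, List.mem_cons]
        exact Or.inr (hr _ hv)
      · intro v hv
        rw [Walk.support_cons, List.mem_cons] at hv
        rcases hv with rfl | hv
        · intro hvr; exact ((Walk.cons_isPath_iff h p).mp hp).2 (hr _ hvr)
        · exact hdisj _ hv

lemma induce_singleton_connected (v : V) : (G.induce ({v} : Set V)).Connected := by
  rw [connected_iff]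
  refine ⟨fun a b => ?_, ⟨⟨v, rfl⟩⟩⟩
  have hab : a = b := Subsingleton.elim a b
  rw [hab]

lemma exists_walk_in_set {S : Set V} (hS : (G.induce S).Connected) {a b : V}
    (ha : a ∈ S) (hb : b ∈ S) : ∃ p : G.Walk a b, ∀ v ∈ p.support, v ∈ S := by
  obtain ⟨q⟩ := hS ⟨a, ha⟩ ⟨b, hb⟩
  refine ⟨q.map (Embedding.induce S).toHom, ?_⟩
  intro v hv
  erw [Walk.support_map, List.mem_map] at hv
  obtain ⟨⟨u, hu⟩, _, rfl⟩ := hv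
  exact hu

/-- The key configuration lemma. -/
lemma config {S A₁ A₂ A₃ : Set V} (hS : (G.induce S).Connected)
    (h1 : A₁.Nonempty) (h2 : A₂.Nonempty) (h3 : A₃.Nonempty)
    (hA1 : A₁ ⊆ S) (hA2 : A₂ ⊆ S) (hA3 : A₃ ⊆ S)
    (htriple : ¬ ∃ v, v ∈ A₁ ∧ v ∈ A₂ ∧ v ∈ A₃) :
    ∃ C D : Set V, C ⊆ S ∧ D ⊆ S ∧ (G.induce C).Connected ∧ (G.induce D).Connected ∧
      Disjoint C D ∧ (∃ c ∈ C, ∃ d ∈ D, G.Adj c d) ∧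
      (((C ∩ A₁).Nonempty ∧ (C ∩ A₂).Nonempty ∧ (D ∩ A₃).Nonempty) ∨
       ((C ∩ A₂).Nonempty ∧ (C ∩ A₃).Nonempty ∧ (D ∩ A₁).Nonempty) ∨
       ((C ∩ A₃).Nonempty ∧ (C ∩ A₁).Nonempty ∧ (D ∩ A₂).Nonempty)) := by
  classical
  obtain ⟨a, ha⟩ := h1
  obtain ⟨b, hb⟩ := h2
  obtain ⟨w0, hw0⟩ := exists_walk_in_set hS (hA1 ha) (hA2 hb)
  set p := w0.bypass with hpdef
  have hp : p.IsPath := w0.bypass_isPath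
  have hpS : ∀ v ∈ p.support, v ∈ S := fun v hv => hw0 v (w0.support_bypass_subset hv)
  by_cases hmeets : ∃ x, x ∈ p.support ∧ x ∈ A₃
  · obtain ⟨x, hxp, hxA3⟩ := hmeets
    by_cases hxb : x = b
    · -- x = b : C around b meets A₂, A₃; D meets A₁
      subst hxb
      have hxa : x ≠ a := by
        rintro rfl
        exact htriple ⟨x, ha, hb, hxA3⟩
      have hxrev : x ∈ p.reverse.support := by
        rw [Walk.support_reverse, List.mem_reverse]; exact hxp
      obtain ⟨c, q, r, hadj, hq, hr, hdisj⟩ := splitAt p.reverse hp.reverse x hxrev hxa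
      have hqp : ∀ v ∈ q.support, v ∈ p.support := by
        intro v hv
        have := hq v hv
        rwa [Walk.support_reverse, List.mem_reverse] at this
      have hrp : ∀ v ∈ r.support, v ∈ p.support := by
        intro v hv
        have := hr v hv
        rwa [Walk.support_reverse, List.mem_reverse] at this
      refine ⟨{v | v ∈ q.support}, {v | v ∈ r.support},
        fun v hv => hpS v (hqp v hv), fun v hv => hpS v (hrp v hv),
        q.connected_induce_support, r.connected_induce_support,
        Set.disjoint_left.mpr (fun v hv => hdisj v hv),
        ⟨x, q.start_mem_support, c, r.start_mem_support, hadj⟩,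
        Or.inr (Or.inl ⟨⟨x, q.start_mem_support, hb⟩, ⟨x, q.start_mem_support, hxA3⟩,
          ⟨a, r.end_mem_support, ha⟩⟩)⟩
    · -- x ≠ b : C = prefix up to x (meets A₁, A₃), D = suffix (meets A₂)
      obtain ⟨c, q, r, hadj, hq, hr, hdisj⟩ := splitAt p hp x hxp hxb
      refine ⟨{v | v ∈ q.support}, {v | v ∈ r.support},
        fun v hv => hpS v (hq v hv), fun v hv => hpS v (hr v hv),
        q.connected_induce_support, r.connected_induce_support,
        Set.disjoint_left.mpr (fun v hv => hdisj v hv),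
        ⟨x, q.end_mem_support, c, r.start_mem_support, hadj⟩,
        Or.inr (Or.inr ⟨⟨x, q.end_mem_support, hxA3⟩, ⟨a, q.start_mem_support, ha⟩,
          ⟨b, r.end_mem_support, hb⟩⟩)⟩
  · -- support p misses A₃
    push_neg at hmeets
    obtain ⟨t, ht⟩ := h3
    obtain ⟨w1, hw1⟩ := exists_walk_in_set hS (hA1 ha) (hA3 ht)
    have haP : a ∈ ({v | v ∈ p.support} : Set V) := p.start_mem_support
    obtain ⟨z, q2, hzP, hq2sub, hq2hit⟩ :=
      firstHit w1.reverse ({v | v ∈ p.support} : Set V) haP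
    have hq2S : ∀ v ∈ q2.support, v ∈ S := by
      intro v hv
      have := hq2sub v hv
      rw [Walk.support_reverse, List.mem_reverse] at this
      exact hw1 v this
    set p3 := q2.bypass with hp3def
    have hp3 : p3.IsPath := q2.bypass_isPath
    have hp3sub : ∀ v ∈ p3.support, v ∈ q2.support := fun v hv => q2.support_bypass_subset hv
    have hzt : z ≠ t := by
      rintro rfl
      exact hmeets z hzP ht
    have hzrev : z ∈ p3.reverse.support := by
      rw [Walk.support_reverse, List.mem_reverse]; exact p3.end_mem_support
    obtain ⟨c, q, r, hadj, hq, hr, hdisj⟩ := splitAt p3.reverse hp3.reverse z hzrev hzt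
    have hrq2 : ∀ v ∈ r.support, v ∈ q2.support := by
      intro v hv
      have := hr v hv
      rw [Walk.support_reverse, List.mem_reverse] at this
      exact hp3sub v this
    have hznr : z ∉ r.support := hdisj z q.start_mem_support
    refine ⟨{v | v ∈ p.support}, {v | v ∈ r.support},
      hpS, fun v hv => hq2S v (hrq2 v hv),
      p.connected_induce_support, r.connected_induce_support,
      ?_, ⟨z, hzP, c, r.start_mem_support, hadj⟩,
      Or.inl ⟨⟨a, p.start_mem_support, ha⟩, ⟨b, p.end_mem_support, hb⟩,
        ⟨t, r.end_mem_support, ht⟩⟩⟩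
    rw [Set.disjoint_right]
    intro v hvr hvP
    have : v = z := hq2hit v (hrq2 v hvr) hvP
    subst this
    exact hznr hvr

/-- Build a `K23` minor from five sets. -/
lemma buildK23 {X1 X2 Y1 Y2 Y3 : Set V}
    (cX1 : (G.induce X1).Connected) (cX2 : (G.induce X2).Connected)
    (cY1 : (G.induce Y1).Connected) (cY2 : (G.induce Y2).Connected)
    (cY3 : (G.induce Y3).Connected)
    (dX : Disjoint X1 X2)
    (d11 : Disjoint X1 Y1) (d12 : Disjoint X1 Y2) (d13 : Disjoint X1 Y3)
    (d21 : Disjoint X2 Y1) (d22 : Disjoint X2 Y2) (d23 : Disjoint X2 Y3)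
    (dY12 : Disjoint Y1 Y2) (dY13 : Disjoint Y1 Y3) (dY23 : Disjoint Y2 Y3)
    (e11 : ∃ a ∈ X1, ∃ b ∈ Y1, G.Adj a b) (e12 : ∃ a ∈ X1, ∃ b ∈ Y2, G.Adj a b)
    (e13 : ∃ a ∈ X1, ∃ b ∈ Y3, G.Adj a b) (e21 : ∃ a ∈ X2, ∃ b ∈ Y1, G.Adj a b)
    (e22 : ∃ a ∈ X2, ∃ b ∈ Y2, G.Adj a b) (e23 : ∃ a ∈ X2, ∃ b ∈ Y3, G.Adj a b) :
    IsMinor G K23 := by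
  classical
  have swap : ∀ {A B : Set V}, (∃ a ∈ A, ∃ b ∈ B, G.Adj a b) →
      ∃ a ∈ B, ∃ b ∈ A, G.Adj a b := by
    rintro A B ⟨a, ha, b, hb, hab⟩
    exact ⟨b, hb, a, ha, hab.symm⟩
  refine ⟨Sum.elim (fun i : Fin 2 => if i = 0 then X1 else X2)
      (fun j : Fin 3 => if j = 0 then Y1 else if j = 1 then Y2 else Y3), ?_, ?_, ?_, ?_⟩
  · rintro (i | j)
    · fin_cases i
      · exact ⟨_, cX1.nonempty.some.2⟩
      · exact ⟨_, cX2.nonempty.some.2⟩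
    · fin_cases j
      · exact ⟨_, cY1.nonempty.some.2⟩
      · exact ⟨_, cY2.nonempty.some.2⟩
      · exact ⟨_, cY3.nonempty.some.2⟩
  · rintro (i | j)
    · fin_cases i
      · exact cX1
      · exact cX2
    · fin_cases j
      · exact cY1
      · exact cY2
      · exact cY3
  · rintro (i | j) (i' | j') hxy <;>
      [skip; skip; skip; skip] <;>
      first
      | (fin_cases i <;> fin_cases i' <;>
          first
          | exact absurd rfl hxy
          | exact dX
          | exact dX.symm)
      | (fin_cases i <;> fin_cases j' <;>
          first
          | exact d11 | exact d12 | exact d13 | exact d21 | exact d22 | exact d23)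
      | (fin_cases j <;> fin_cases i' <;>
          first
          | exact d11.symm | exact d12.symm | exact d13.symm
          | exact d21.symm | exact d22.symm | exact d23.symm)
      | (fin_cases j <;> fin_cases j' <;>
          first
          | exact absurd rfl hxy
          | exact dY12 | exact dY13 | exact dY23
          | exact dY12.symm | exact dY13.symm | exact dY23.symm)
  · rintro (i | j) (i' | j') hadj
    · exact absurd hadj (by simp [K23])
    · fin_cases i <;> fin_cases j' <;>
        first
        | exact e11 | exact e12 | exact e13 | exact e21 | exact e22 | exact e23
    · fin_cases j <;> fin_cases i' <;>
        first
        | exact swap e11 | exact swap e12 | exact swap e13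
        | exact swap e21 | exact swap e22 | exact swap e23
    · exact absurd hadj (by simp [K23])

end Helpers

/-- A finite simple graph with no `K_{2,3}` minor contains `K⁴` as a
minor if and only if it contains `K⁴` as a subgraph. -/
theorem stmt_0 {V : Type u} [Fintype V] (G : SimpleGraph V) (hK23 : ¬ IsMinor G K23) :
    IsMinor G K4 ↔ ContainsSubgraph G K4 := by
  classical
  constructor
  · intro hminor
    -- Fin 4 arithmetic facts
    have hcover : ∀ i j : Fin 4, j ≠ i → j = i + 1 ∨ j = i + 2 ∨ j = i + 3 := by decide
    have hne1 : ∀ i : Fin 4, i + 1 ≠ i := by decide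
    have hne2 : ∀ i : Fin 4, i + 2 ≠ i := by decide
    have hne3 : ∀ i : Fin 4, i + 3 ≠ i := by decide
    have hne12 : ∀ i : Fin 4, i + 1 ≠ i + 2 := by decide
    have hne13 : ∀ i : Fin 4, i + 1 ≠ i + 3 := by decide
    have hne23 : ∀ i : Fin 4, i + 2 ≠ i + 3 := by decide
    set Q : (Fin 4 → Set V) → Prop := fun B =>
      (∀ x, (B x).Nonempty) ∧ (∀ x, (G.induce (B x)).Connected) ∧
      (Pairwise fun x y => Disjoint (B x) (B y)) ∧
      ∀ ⦃x y : Fin 4⦄, K4.Adj x y → ∃ a ∈ B x, ∃ b ∈ B y, G.Adj a b with hQdef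
    have hMne : ({n | ∃ B, Q B ∧ (∑ i, (B i).ncard) = n} : Set ℕ).Nonempty := by
      obtain ⟨B, hB⟩ := hminor
      exact ⟨_, B, hB, rfl⟩
    obtain ⟨B, hQB, hsum⟩ := Nat.sInf_mem hMne
    have hmin : ∀ B', Q B' →
        sInf {n | ∃ B, Q B ∧ (∑ i, (B i).ncard) = n} ≤ ∑ i, (B' i).ncard :=
      fun B' h => Nat.sInf_le ⟨B', h, rfl⟩
    obtain ⟨hBne, hBconn, hBdisj, hBadj⟩ := hQB
    -- every branch set is a singleton
    have hsingle : ∀ i, ∃ v, B i = {v} := by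
      intro i
      by_contra hns
      push_neg at hns
      obtain ⟨u, hu⟩ := hBne i
      have h2 : 1 < (B i).ncard := by
        rw [Set.one_lt_ncard (Set.toFinite _)]
        have : ¬ B i ⊆ {u} := by
          intro hsub
          exact hns u (hsub.antisymm (by simpa using hu))
        obtain ⟨w', hw', hwu⟩ := Set.not_subset.mp this
        exact ⟨u, hu, w', hw', fun h => hwu (h ▸ rfl)⟩
      -- no vertex of B i attaches to all three other branch sets
      have htriple : ¬ ∃ v, v ∈ B i ∧
          (∃ b ∈ B (i + 1), G.Adj v b) ∧ (∃ b ∈ B (i + 2), G.Adj v b) ∧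
          (∃ b ∈ B (i + 3), G.Adj v b) := by
        rintro ⟨v, hv, hv1, hv2, hv3⟩
        set B' : Fin 4 → Set V := Function.update B i {v} with hB'def
        have hB'i : B' i = {v} := Function.update_self i {v} B
        have hB'j : ∀ j, j ≠ i → B' j = B j := fun j hj => Function.update_of_ne hj {v} B
        have hQB' : Q B' := by
          refine ⟨?_, ?_, ?_, ?_⟩
          · intro x
            by_cases hx : x = i
            · subst hx; rw [hB'i]; exact ⟨v, rfl⟩
            · rw [hB'j x hx]; exact hBne x
          · intro x
            by_cases hx : x = i
            · subst hx; rw [hB'i]; exact induce_singleton_connected v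
            · rw [hB'j x hx]; exact hBconn x
          · intro x y hxy
            have hsubx : B' x ⊆ B x := by
              by_cases hx : x = i
              · subst hx; rw [hB'i]; simpa using hv
              · rw [hB'j x hx]
            have hsuby : B' y ⊆ B y := by
              by_cases hy : y = i
              · subst hy; rw [hB'i]; simpa using hv
              · rw [hB'j y hy]
            exact ((hBdisj hxy).mono hsubx hsuby)
          · intro x y hadj
            have hxy : x ≠ y := hadj.ne
            by_cases hx : x = i
            · subst hx
              have hyne : y ≠ x := hxy.symm
              rw [hB'i, hB'j y hyne]
              rcases hcover x y hyne with rfl | rfl | rfl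
              · obtain ⟨b, hb, hab⟩ := hv1; exact ⟨v, rfl, b, hb, hab⟩
              · obtain ⟨b, hb, hab⟩ := hv2; exact ⟨v, rfl, b, hb, hab⟩
              · obtain ⟨b, hb, hab⟩ := hv3; exact ⟨v, rfl, b, hb, hab⟩
            · by_cases hy : y = i
              · subst hy
                rw [hB'i, hB'j x hx]
                rcases hcover y x hx with rfl | rfl | rfl
                · obtain ⟨b, hb, hab⟩ := hv1; exact ⟨b, hb, v, rfl, hab.symm⟩
                · obtain ⟨b, hb, hab⟩ := hv2; exact ⟨b, hb, v, rfl, hab.symm⟩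
                · obtain ⟨b, hb, hab⟩ := hv3; exact ⟨b, hb, v, rfl, hab.symm⟩
              · rw [hB'j x hx, hB'j y hy]; exact hBadj hadj
        have hlt : (∑ j, (B' j).ncard) < ∑ j, (B j).ncard := by
          have hsplit : ∀ (f : Fin 4 → ℕ),
              ∑ j, f j = f i + ∑ j ∈ Finset.univ.erase i, f j :=
            fun f => (Finset.add_sum_erase _ f (Finset.mem_univ i)).symm
          rw [hsplit (fun j => (B' j).ncard), hsplit (fun j => (B j).ncard)]
          have heq : (∑ j ∈ Finset.univ.erase i, (B' j).ncard) =
              ∑ j ∈ Finset.univ.erase i, (B j).ncard :=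
            Finset.sum_congr rfl (fun j hj => by rw [hB'j j (Finset.ne_of_mem_erase hj)])
          rw [hB'i, Set.ncard_singleton, heq]
          exact Nat.add_lt_add_right h2 _
        have hle := hmin B' hQB'
        rw [← hsum] at hle
        exact absurd hlt (not_lt.mpr hle)
      -- apply the configuration lemma
      set A₁ : Set V := {v | v ∈ B i ∧ ∃ b ∈ B (i + 1), G.Adj v b} with hA1def
      set A₂ : Set V := {v | v ∈ B i ∧ ∃ b ∈ B (i + 2), G.Adj v b} with hA2def
      set A₃ : Set V := {v | v ∈ B i ∧ ∃ b ∈ B (i + 3), G.Adj v b} with hA3def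
      have hA1ne : A₁.Nonempty := by
        obtain ⟨a, ha, b, hb, hab⟩ := hBadj (show K4.Adj i (i + 1) from (hne1 i).symm)
        exact ⟨a, ha, b, hb, hab⟩
      have hA2ne : A₂.Nonempty := by
        obtain ⟨a, ha, b, hb, hab⟩ := hBadj (show K4.Adj i (i + 2) from (hne2 i).symm)
        exact ⟨a, ha, b, hb, hab⟩
      have hA3ne : A₃.Nonempty := by
        obtain ⟨a, ha, b, hb, hab⟩ := hBadj (show K4.Adj i (i + 3) from (hne3 i).symm)
        exact ⟨a, ha, b, hb, hab⟩
      have htriple' : ¬ ∃ v, v ∈ A₁ ∧ v ∈ A₂ ∧ v ∈ A₃ := by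
        rintro ⟨v, hv1, hv2, hv3⟩
        exact htriple ⟨v, hv1.1, hv1.2, hv2.2, hv3.2⟩
      obtain ⟨C, D, hCS, hDS, hCconn, hDconn, hCD, ⟨c, hc, d, hd, hcd⟩, hcase⟩ :=
        config (hBconn i) hA1ne hA2ne hA3ne
          (fun v hv => hv.1) (fun v hv => hv.1) (fun v hv => hv.1) htriple'
      -- disjointness helpers
      have hDisjC : ∀ j, j ≠ i → Disjoint (B j) C :=
        fun j hj => Set.disjoint_of_subset_right hCS (hBdisj hj)
      have hDisjD : ∀ j, j ≠ i → Disjoint (B j) D :=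
        fun j hj => Set.disjoint_of_subset_right hDS (hBdisj hj)
      have hBB : ∀ j k : Fin 4, j ≠ k → ∃ a ∈ B j, ∃ b ∈ B k, G.Adj a b :=
        fun j k hjk => hBadj hjk
      apply hK23
      rcases hcase with ⟨hC1, hC2, hD3⟩ | ⟨hC2, hC3, hD1⟩ | ⟨hC3, hC1, hD2⟩
      · -- X1 = B (i+3), X2 = C, Y1 = B (i+1), Y2 = B (i+2), Y3 = D
        obtain ⟨v1, hv1C, hv1A⟩ := hC1
        obtain ⟨v2, hv2C, hv2A⟩ := hC2
        obtain ⟨v3, hv3D, hv3A⟩ := hD3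
        obtain ⟨b1, hb1, hab1⟩ := hv1A.2
        obtain ⟨b2, hb2, hab2⟩ := hv2A.2
        obtain ⟨b3, hb3, hab3⟩ := hv3A.2
        exact buildK23 (hBconn (i + 3)) hCconn (hBconn (i + 1)) (hBconn (i + 2)) hDconn
          (hDisjC _ (hne3 i)) (hBdisj (hne13 i).symm) (hBdisj (hne23 i).symm)
          (hDisjD _ (hne3 i)) ((hDisjC _ (hne1 i)).symm) ((hDisjC _ (hne2 i)).symm) hCD
          (hBdisj (hne12 i)) (hDisjD _ (hne1 i)) (hDisjD _ (hne2 i))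
          (hBB _ _ (hne13 i).symm) (hBB _ _ (hne23 i).symm)
          ⟨b3, hb3, v3, hv3D, hab3.symm⟩
          ⟨v1, hv1C, b1, hb1, hab1⟩ ⟨v2, hv2C, b2, hb2, hab2⟩
          ⟨c, hc, d, hd, hcd⟩
      · -- X1 = B (i+1), X2 = C, Y1 = B (i+2), Y2 = B (i+3), Y3 = D
        obtain ⟨v1, hv1D, hv1A⟩ := hD1
        obtain ⟨v2, hv2C, hv2A⟩ := hC2
        obtain ⟨v3, hv3C, hv3A⟩ := hC3
        obtain ⟨b1, hb1, hab1⟩ := hv1A.2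
        obtain ⟨b2, hb2, hab2⟩ := hv2A.2
        obtain ⟨b3, hb3, hab3⟩ := hv3A.2
        exact buildK23 (hBconn (i + 1)) hCconn (hBconn (i + 2)) (hBconn (i + 3)) hDconn
          (hDisjC _ (hne1 i)) (hBdisj (hne12 i)) (hBdisj (hne13 i))
          (hDisjD _ (hne1 i)) ((hDisjC _ (hne2 i)).symm) ((hDisjC _ (hne3 i)).symm) hCD
          (hBdisj (hne23 i)) (hDisjD _ (hne2 i)) (hDisjD _ (hne3 i))
          (hBB _ _ (hne12 i)) (hBB _ _ (hne13 i))
          ⟨b1, hb1, v1, hv1D, hab1.symm⟩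
          ⟨v2, hv2C, b2, hb2, hab2⟩ ⟨v3, hv3C, b3, hb3, hab3⟩
          ⟨c, hc, d, hd, hcd⟩
      · -- X1 = B (i+2), X2 = C, Y1 = B (i+3), Y2 = B (i+1), Y3 = D
        obtain ⟨v2, hv2D, hv2A⟩ := hD2
        obtain ⟨v3, hv3C, hv3A⟩ := hC3
        obtain ⟨v1, hv1C, hv1A⟩ := hC1
        obtain ⟨b1, hb1, hab1⟩ := hv1A.2
        obtain ⟨b2, hb2, hab2⟩ := hv2A.2
        obtain ⟨b3, hb3, hab3⟩ := hv3A.2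
        exact buildK23 (hBconn (i + 2)) hCconn (hBconn (i + 3)) (hBconn (i + 1)) hDconn
          (hDisjC _ (hne2 i)) (hBdisj (hne23 i)) (hBdisj (hne12 i).symm)
          (hDisjD _ (hne2 i)) ((hDisjC _ (hne3 i)).symm) ((hDisjC _ (hne1 i)).symm) hCD
          (hBdisj (hne13 i).symm) (hDisjD _ (hne3 i)) (hDisjD _ (hne1 i))
          (hBB _ _ (hne23 i)) (hBB _ _ (hne12 i).symm)
          ⟨b2, hb2, v2, hv2D, hab2.symm⟩
          ⟨v3, hv3C, b3, hb3, hab3⟩ ⟨v1, hv1C, b1, hb1, hab1⟩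
          ⟨c, hc, d, hd, hcd⟩
    -- conclude: subgraph
    choose g hg using hsingle
    refine ⟨⟨g, ?_⟩, ?_⟩
    · intro x y hadj
      obtain ⟨a, ha, b, hb, hab⟩ := hBadj hadj
      rw [hg x, Set.mem_singleton_iff] at ha
      rw [hg y, Set.mem_singleton_iff] at hb
      rwa [ha, hb] at hab
    · intro x y hxy
      by_contra hne
      have hxy' : g x = g y := hxy
      have hd : Disjoint (B x) (B y) := hBdisj hne
      rw [hg x, hg y, hxy'] at hd
      simp at hd
  · rintro ⟨f, hf⟩
    refine ⟨fun x => {f x}, fun x => ⟨f x, rfl⟩,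
      fun x => induce_singleton_connected (f x), ?_, ?_⟩
    · intro x y hxy
      rw [Set.disjoint_singleton]
      exact fun h => hxy (hf h)
    · intro x y hadj
      exact ⟨f x, rfl, f y, rfl, f.map_adj hadj⟩
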